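/- Suppose M is an ℝ[X]-submodule of Den[a,b] (with X acting as the indefinite Denjoy integral) which contains C[a,b], and suppose that either (i) M = C[a,b], or (ii) M is subinterval-closed, i.e. f ∈ M implies f·χ_{(c,d)} ∈ M for every interval (c,d) ⊆ [a,b]. Then for every k ≥ 0, the index of the additive subgroup X^{k+1}M in X^k M is infinite. -/

import Mathlib

open MeasureTheory Set Filter

noncomputable section

attribute [local instance] Classical.propDecidable

/-- The oscillation `ω(F, J)` of `F` on the set `J`. -/
def osc (F : ℝ → ℝ) (J : Set ℝ) : ℝ :=
  sSup {d : ℝ | ∃ x ∈ J, ∃ y ∈ J, d = |F x - F y|}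

/-- `D` is a `K`-edged pre-partition of `[a,b]`: a finite nonempty collection of
pairwise non-overlapping closed subintervals of `[a,b]` whose endpoints lie in `K`. -/
def IsPrePartition (a b : ℝ) (K : Set ℝ) (D : Finset (ℝ × ℝ)) : Prop :=
  D.Nonempty ∧
  (∀ p ∈ D, p.1 ≤ p.2 ∧ p.1 ∈ K ∧ p.2 ∈ K ∧ Icc p.1 p.2 ⊆ Icc a b) ∧
  (D : Set (ℝ × ℝ)).Pairwise fun p q => p.2 ≤ q.1 ∨ q.2 ≤ p.1

/-- `F ∈ AC_*(K)`: absolute continuity in the restricted sense on `K`. -/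
def ACStar (a b : ℝ) (F : ℝ → ℝ) (K : Set ℝ) : Prop :=
  ∀ ε > (0:ℝ), ∃ δ > (0:ℝ), ∀ D : Finset (ℝ × ℝ), IsPrePartition a b K D →
    (∑ p ∈ D, (p.2 - p.1)) < δ → (∑ p ∈ D, osc F (Icc p.1 p.2)) < ε

/-- `F ∈ ACG_*(K)`: `K` is a countable union of closed sets `Kₙ ⊆ [a,b]` with `F ∈ AC_*(Kₙ)`. -/
def ACGStar (a b : ℝ) (F : ℝ → ℝ) (K : Set ℝ) : Prop :=
  ∃ C : ℕ → Set ℝ, (∀ n, IsClosed (C n) ∧ C n ⊆ Icc a b ∧ ACStar a b F (C n)) ∧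
    K = ⋃ n, C n

/-- `F` is the indefinite Denjoy integral of `f` on `[a,b]`:
`F` is continuous on `[a,b]`, `F(a) = 0`, `F ∈ ACG_*([a,b])`, and `F' = f` a.e. on `[a,b]`. -/
def HasDenjoyIntegralFn (a b : ℝ) (f F : ℝ → ℝ) : Prop :=
  ContinuousOn F (Icc a b) ∧ F a = 0 ∧ ACGStar a b F (Icc a b) ∧
    ∀ᵐ x ∂(volume.restrict (Icc a b)), HasDerivAt F (f x) x

/-- `f ∈ Den[a,b]`: `f` is Denjoy integrable on `[a,b]`. -/
def DenjoyIntegrable (a b : ℝ) (f : ℝ → ℝ) : Prop :=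
  ∃ F : ℝ → ℝ, HasDenjoyIntegralFn a b f F

/-- The Denjoy integral `∫_a^b f` (junk value `0` if `f` is not Denjoy integrable). -/
def denjoyIntegral (a b : ℝ) (f : ℝ → ℝ) : ℝ :=
  if h : DenjoyIntegrable a b f then Classical.choose h b else 0

/-- `M[a,b]`: measurable functions on `[a,b]` modulo a.e. equivalence. -/
abbrev MSpace (a b : ℝ) := ℝ →ₘ[volume.restrict (Icc a b)] ℝ

/-- The action of the indeterminate `X`: the indefinite Denjoy integral
`(X·g)(x) = ∫_a^x g` (junk value `0` if `g` is not Denjoy integrable). -/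
def Xop (a b : ℝ) (g : MSpace a b) : MSpace a b :=
  if h : ∃ F : C(ℝ, ℝ), HasDenjoyIntegralFn a b (fun x => g x) ⇑F then
    AEEqFun.mk ⇑(Classical.choose h) (Classical.choose h).continuous.aestronglyMeasurable
  else 0

section DenjoyAux

open ENNReal Topology

variable {a b : ℝ}

/-! ### Oscillation lemmas -/

lemma osc_congr {F G : ℝ → ℝ} {J : Set ℝ} (h : ∀ x ∈ J, F x = G x) : osc F J = osc G J := by
  unfold osc
  congr 1
  ext d
  constructor
  · rintro ⟨x, hx, y, hy, rfl⟩
    exact ⟨x, hx, y, hy, by rw [h x hx, h y hy]⟩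
  · rintro ⟨x, hx, y, hy, rfl⟩
    exact ⟨x, hx, y, hy, by rw [h x hx, h y hy]⟩

lemma osc_nonneg (F : ℝ → ℝ) (J : Set ℝ) : 0 ≤ osc F J := by
  apply Real.sSup_nonneg
  rintro d ⟨x, hx, y, hy, rfl⟩
  exact abs_nonneg _

lemma osc_le {F : ℝ → ℝ} {J : Set ℝ} {B : ℝ} (hB : 0 ≤ B)
    (h : ∀ x ∈ J, ∀ y ∈ J, |F x - F y| ≤ B) : osc F J ≤ B := by
  apply Real.sSup_le _ hB
  rintro d ⟨x, hx, y, hy, rfl⟩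
  exact h x hx y hy

lemma abs_sub_le_osc {F : ℝ → ℝ} {J : Set ℝ} {B : ℝ} (hbd : ∀ x ∈ J, |F x| ≤ B)
    {x y : ℝ} (hx : x ∈ J) (hy : y ∈ J) : |F x - F y| ≤ osc F J := by
  apply le_csSup
  · refine ⟨2 * B, ?_⟩
    rintro d ⟨u, hu, v, hv, rfl⟩
    have h1 : |F u - F v| ≤ |F u| + |F v| := by
      simpa [Real.norm_eq_abs] using norm_sub_le (F u) (F v)
    have := hbd u hu
    have := hbd v hv
    linarith
  · exact ⟨x, hx, y, hy, rfl⟩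

/-! ### AC* lemmas -/

lemma ACStar.mono_set {F : ℝ → ℝ} {K K' : Set ℝ} (h : ACStar a b F K) (hKK : K' ⊆ K) :
    ACStar a b F K' := by
  intro ε hε
  obtain ⟨δ, hδ, hAC⟩ := h ε hε
  refine ⟨δ, hδ, fun D hD hlen => hAC D ?_ hlen⟩
  obtain ⟨h1, h2, h3⟩ := hD
  exact ⟨h1, fun p hp => ⟨(h2 p hp).1, hKK (h2 p hp).2.1, hKK (h2 p hp).2.2.1, (h2 p hp).2.2.2⟩, h3⟩

lemma ACStar.sub {F G : ℝ → ℝ} {K : Set ℝ} (hF : ACStar a b F K) (hG : ACStar a b G K)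
    (hFc : ContinuousOn F (Set.Icc a b)) (hGc : ContinuousOn G (Set.Icc a b)) :
    ACStar a b (fun x => F x - G x) K := by
  obtain ⟨BF, hBF⟩ := isCompact_Icc.exists_bound_of_continuousOn hFc
  obtain ⟨BG, hBG⟩ := isCompact_Icc.exists_bound_of_continuousOn hGc
  have hBF' : ∀ x ∈ Set.Icc a b, |F x| ≤ BF := by simpa [Real.norm_eq_abs] using hBF
  have hBG' : ∀ x ∈ Set.Icc a b, |G x| ≤ BG := by simpa [Real.norm_eq_abs] using hBG
  intro ε hε
  obtain ⟨δ₁, hδ₁, h₁⟩ := hF (ε / 2) (by linarith)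
  obtain ⟨δ₂, hδ₂, h₂⟩ := hG (ε / 2) (by linarith)
  refine ⟨min δ₁ δ₂, lt_min hδ₁ hδ₂, fun D hD hlen => ?_⟩
  have key : ∀ p ∈ D, osc (fun x => F x - G x) (Set.Icc p.1 p.2)
      ≤ osc F (Set.Icc p.1 p.2) + osc G (Set.Icc p.1 p.2) := by
    intro p hp
    have hsub : Set.Icc p.1 p.2 ⊆ Set.Icc a b := (hD.2.1 p hp).2.2.2
    apply osc_le (add_nonneg (osc_nonneg _ _) (osc_nonneg _ _))
    intro x hx y hy
    have h1 : |F x - F y| ≤ osc F (Set.Icc p.1 p.2) :=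
      abs_sub_le_osc (fun z hz => hBF' z (hsub hz)) hx hy
    have h2 : |G x - G y| ≤ osc G (Set.Icc p.1 p.2) :=
      abs_sub_le_osc (fun z hz => hBG' z (hsub hz)) hx hy
    have h3 : F x - G x - (F y - G y) = (F x - F y) - (G x - G y) := by ring
    have h4 : |(F x - F y) - (G x - G y)| ≤ |F x - F y| + |G x - G y| := by
      simpa [Real.norm_eq_abs] using norm_sub_le (F x - F y) (G x - G y)
    rw [h3]
    linarith
  have hsum1 := h₁ D hD (lt_of_lt_of_le hlen (min_le_left _ _))
  have hsum2 := h₂ D hD (lt_of_lt_of_le hlen (min_le_right _ _))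
  calc ∑ p ∈ D, osc (fun x => F x - G x) (Set.Icc p.1 p.2)
      ≤ ∑ p ∈ D, (osc F (Set.Icc p.1 p.2) + osc G (Set.Icc p.1 p.2)) := Finset.sum_le_sum key
    _ = (∑ p ∈ D, osc F (Set.Icc p.1 p.2)) + ∑ p ∈ D, osc G (Set.Icc p.1 p.2) :=
        Finset.sum_add_distrib
    _ < ε / 2 + ε / 2 := add_lt_add hsum1 hsum2
    _ = ε := by ring

lemma ACGStar.sub {F G : ℝ → ℝ} (hF : ACGStar a b F (Set.Icc a b))
    (hG : ACGStar a b G (Set.Icc a b))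
    (hFc : ContinuousOn F (Set.Icc a b)) (hGc : ContinuousOn G (Set.Icc a b)) :
    ACGStar a b (fun x => F x - G x) (Set.Icc a b) := by
  obtain ⟨C, hC, hCU⟩ := hF
  obtain ⟨C', hC', hCU'⟩ := hG
  refine ⟨fun n => C n.unpair.1 ∩ C' n.unpair.2, fun n =>
    ⟨(hC _).1.inter (hC' _).1, Set.inter_subset_left.trans (hC _).2.1,
      ACStar.sub ((hC _).2.2.mono_set Set.inter_subset_left)
        ((hC' _).2.2.mono_set Set.inter_subset_right) hFc hGc⟩, ?_⟩
  apply Set.Subset.antisymm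
  · intro x hx
    have h1 : x ∈ ⋃ n, C n := hCU ▸ hx
    have h2 : x ∈ ⋃ n, C' n := hCU' ▸ hx
    obtain ⟨i, hi⟩ := Set.mem_iUnion.1 h1
    obtain ⟨j, hj⟩ := Set.mem_iUnion.1 h2
    exact Set.mem_iUnion.2 ⟨Nat.pair i j, by simp [Nat.unpair_pair, hi, hj]⟩
  · intro x hx
    obtain ⟨n, hn⟩ := Set.mem_iUnion.1 hx
    exact (hC _).2.1 hn.1

/-! ### Null images under AC* -/

lemma image_null_of_ACStar {F : ℝ → ℝ} (hFc : ContinuousOn F (Set.Icc a b)) {K S : Set ℝ}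
    (hK : IsClosed K) (hKI : K ⊆ Set.Icc a b) (hAC : ACStar a b F K)
    (hSK : S ⊆ K) (hS0 : volume S = 0) : volume (F '' S) = 0 := by
  obtain ⟨B, hB⟩ := isCompact_Icc.exists_bound_of_continuousOn hFc
  have hBabs : ∀ x ∈ Set.Icc a b, |F x| ≤ B := by simpa [Real.norm_eq_abs] using hB
  have key : ∀ ε : ℝ, 0 < ε → volume (F '' S) ≤ ENNReal.ofReal (2 * ε) := by
    intro ε hε
    obtain ⟨δ, hδ, hACδ⟩ := hAC ε hε
    obtain ⟨U, hSU, hUo, hUlt⟩ := Set.exists_isOpen_lt_of_lt S (ENNReal.ofReal δ)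
      (by rw [hS0]; exact ENNReal.ofReal_pos.2 hδ)
    set 𝒞 : Set (Set ℝ) := (fun x => connectedComponentIn U x) '' S with h𝒞def
    have hcomp : ∀ C ∈ 𝒞, ∃ x ∈ S, C = connectedComponentIn U x := by
      rintro C ⟨x, hx, rfl⟩; exact ⟨x, hx, rfl⟩
    have hCopen : ∀ C ∈ 𝒞, IsOpen C := by
      rintro C ⟨x, hx, rfl⟩; exact hUo.connectedComponentIn
    have hCsub : ∀ C ∈ 𝒞, C ⊆ U := by
      rintro C ⟨x, hx, rfl⟩; exact connectedComponentIn_subset U x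
    have hCmem : ∀ C ∈ 𝒞, (K ∩ C).Nonempty := by
      rintro C ⟨x, hx, rfl⟩
      exact ⟨x, hSK hx, mem_connectedComponentIn (hSU hx)⟩
    have hCpre : ∀ C ∈ 𝒞, IsPreconnected C := by
      rintro C ⟨x, hx, rfl⟩; exact isPreconnected_connectedComponentIn
    have hCdisj : ∀ C ∈ 𝒞, ∀ C' ∈ 𝒞, C ≠ C' → C ∩ C' = ∅ := by
      rintro C ⟨x, hx, rfl⟩ C' ⟨y, hy, rfl⟩ hne
      by_contra h
      obtain ⟨z, hz, hz'⟩ := Set.nonempty_iff_ne_empty.2 h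
      exact hne ((connectedComponentIn_eq hz).trans (connectedComponentIn_eq hz').symm)
    have hcount : 𝒞.Countable := by
      have hrange : ∀ C ∈ 𝒞, ∃ q : ℚ, C = connectedComponentIn U (q : ℝ) := by
        intro C hC
        obtain ⟨x, hx, rfl⟩ := hcomp C hC
        have hxU : x ∈ connectedComponentIn U x := mem_connectedComponentIn (hSU hx)
        have hopen : IsOpen (connectedComponentIn U x) := hUo.connectedComponentIn
        obtain ⟨η, hη, hball⟩ := Metric.isOpen_iff.1 hopen x hxU
        obtain ⟨q, hq1, hq2⟩ := exists_rat_btwn (sub_lt_self x hη)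
        have hqball : (q : ℝ) ∈ Metric.ball x η := by
          rw [Real.ball_eq_Ioo]
          exact ⟨hq1, by linarith⟩
        exact ⟨q, connectedComponentIn_eq (hball hqball)⟩
      have hsub : 𝒞 ⊆ Set.range (fun q : ℚ => connectedComponentIn U (q : ℝ)) := by
        intro C hC
        obtain ⟨q, hq⟩ := hrange C hC
        exact ⟨q, hq.symm⟩
      exact (Set.countable_range _).mono hsub
    set pf : Set ℝ → ℝ := fun C => sInf (K ∩ C) with hpfdef
    set qf : Set ℝ → ℝ := fun C => sSup (K ∩ C) with hqfdef
    have hbddb : ∀ C : Set ℝ, BddBelow (K ∩ C) :=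
      fun C => bddBelow_Icc.mono (fun x hx => hKI hx.1)
    have hbdda : ∀ C : Set ℝ, BddAbove (K ∩ C) :=
      fun C => bddAbove_Icc.mono (fun x hx => hKI hx.1)
    have hpK : ∀ C ∈ 𝒞, pf C ∈ K := fun C hC =>
      hK.closure_subset ((closure_mono Set.inter_subset_left)
        (csInf_mem_closure (hCmem C hC) (hbddb C)))
    have hqK : ∀ C ∈ 𝒞, qf C ∈ K := fun C hC =>
      hK.closure_subset ((closure_mono Set.inter_subset_left)
        (csSup_mem_closure (hCmem C hC) (hbdda C)))
    have hpq : ∀ C ∈ 𝒞, pf C ≤ qf C := fun C hC => csInf_le_csSup (hCmem C hC) (hbddb C) (hbdda C)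
    have hIccK : ∀ C ∈ 𝒞, K ∩ C ⊆ Set.Icc (pf C) (qf C) :=
      fun C _ x hx => ⟨csInf_le (hbddb C) hx, le_csSup (hbdda C) hx⟩
    have hIoo : ∀ C ∈ 𝒞, Set.Ioo (pf C) (qf C) ⊆ C := by
      intro C hC x hx
      obtain ⟨p', hp', hp'x⟩ := exists_lt_of_csInf_lt (hCmem C hC) hx.1
      obtain ⟨q', hq', hxq'⟩ := exists_lt_of_lt_csSup (hCmem C hC) hx.2
      have hord : Set.OrdConnected C := (hCpre C hC).ordConnected
      exact hord.out hp'.2 hq'.2 ⟨le_of_lt hp'x, le_of_lt hxq'⟩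
    have hdeg : ∀ C ∈ 𝒞, pf C = qf C → pf C ∈ C := by
      intro C hC h
      obtain ⟨x, hx⟩ := hCmem C hC
      have h2 := hIccK C hC hx
      have : x = pf C := le_antisymm (h ▸ h2.2) h2.1
      exact this ▸ hx.2
    have hmeet : ∀ C ∈ 𝒞, ∀ C' ∈ 𝒞, C ≠ C' → qf C ≤ pf C' ∨ qf C' ≤ pf C := by
      intro C hC C' hC' hne
      by_contra hcon
      push_neg at hcon
      obtain ⟨h1, h2⟩ := hcon
      have hdisj := hCdisj C hC C' hC' hne
      have hmain : (C ∩ C').Nonempty := by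
        rcases eq_or_lt_of_le (hpq C hC) with hd | hd
        · have htC : pf C ∈ C := hdeg C hC hd
          rcases eq_or_lt_of_le (hpq C' hC') with hd' | hd'
          · exfalso
            rw [← hd] at h1
            rw [← hd'] at h2
            linarith
          · refine ⟨pf C, htC, hIoo C' hC' ⟨?_, ?_⟩⟩
            · rw [hd]; exact h1
            · exact h2
        · rcases eq_or_lt_of_le (hpq C' hC') with hd' | hd'
          · have htC' : pf C' ∈ C' := hdeg C' hC' hd'
            refine ⟨pf C', hIoo C hC ⟨?_, ?_⟩, htC'⟩
            · rw [hd']; exact h2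
            · exact h1
          · have hmM : max (pf C) (pf C') < min (qf C) (qf C') := by
              rw [max_lt_iff]
              constructor <;> rw [lt_min_iff]
              · exact ⟨hd, h2⟩
              · exact ⟨h1, hd'⟩
            obtain ⟨x, hx1, hx2⟩ := exists_between hmM
            refine ⟨x, hIoo C hC ⟨?_, ?_⟩, hIoo C' hC' ⟨?_, ?_⟩⟩
            · exact lt_of_le_of_lt (le_max_left _ _) hx1
            · exact lt_of_lt_of_le hx2 (min_le_left _ _)
            · exact lt_of_le_of_lt (le_max_right _ _) hx1
            · exact lt_of_lt_of_le hx2 (min_le_right _ _)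
      rw [hdisj] at hmain
      exact Set.not_nonempty_empty hmain
    have hinj : ∀ C ∈ 𝒞, ∀ C' ∈ 𝒞, (pf C, qf C) = (pf C', qf C') → C = C' := by
      intro C hC C' hC' hpair
      by_contra hne
      have h1 : pf C = pf C' := congrArg Prod.fst hpair
      have h2 : qf C = qf C' := congrArg Prod.snd hpair
      have hdegC : pf C = qf C := by
        rcases hmeet C hC C' hC' hne with h | h
        · exact le_antisymm (hpq C hC) (by rw [h1]; exact h)
        · exact le_antisymm (hpq C hC) (by rw [h2]; exact h)
      have hdegC' : pf C' = qf C' := by rw [← h1, ← h2]; exact hdegC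
      have ht : pf C ∈ C := hdeg C hC hdegC
      have ht' : pf C ∈ C' := h1 ▸ hdeg C' hC' hdegC'
      have := hCdisj C hC C' hC' hne
      rw [Set.eq_empty_iff_forall_notMem] at this
      exact this (pf C) ⟨ht, ht'⟩
    have hsubIcc : ∀ C ∈ 𝒞, Set.Icc (pf C) (qf C) ⊆ Set.Icc a b :=
      fun C hC => Set.Icc_subset_Icc (hKI (hpK C hC)).1 (hKI (hqK C hC)).2
    have hcover : F '' S ⊆ ⋃ C ∈ 𝒞, F '' Set.Icc (pf C) (qf C) := by
      rintro _ ⟨x, hx, rfl⟩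
      have hCm : connectedComponentIn U x ∈ 𝒞 := Set.mem_image_of_mem _ hx
      refine Set.mem_biUnion hCm ?_
      exact Set.mem_image_of_mem F
        (hIccK _ hCm ⟨hSK hx, mem_connectedComponentIn (hSU hx)⟩)
    have himg : ∀ C ∈ 𝒞, volume (F '' Set.Icc (pf C) (qf C))
        ≤ ENNReal.ofReal (2 * osc F (Set.Icc (pf C) (qf C))) := by
      intro C hC
      have hsub := hsubIcc C hC
      have himgsub : F '' Set.Icc (pf C) (qf C) ⊆
          Set.Icc (F (pf C) - osc F (Set.Icc (pf C) (qf C)))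
            (F (pf C) + osc F (Set.Icc (pf C) (qf C))) := by
        rintro _ ⟨y, hy, rfl⟩
        have h1 : |F y - F (pf C)| ≤ osc F (Set.Icc (pf C) (qf C)) :=
          abs_sub_le_osc (fun z hz => hBabs z (hsub hz)) hy (Set.left_mem_Icc.2 (hpq C hC))
        rw [abs_le] at h1
        constructor <;> linarith [h1.1, h1.2]
      calc volume (F '' Set.Icc (pf C) (qf C)) ≤ volume (Set.Icc _ _) := measure_mono himgsub
        _ = ENNReal.ofReal (2 * osc F (Set.Icc (pf C) (qf C))) := by
            rw [Real.volume_Icc]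
            congr 1
            ring
    have hboundC : ∑' C : ↥𝒞, ENNReal.ofReal (2 * osc F (Set.Icc (pf ↑C) (qf ↑C)))
        ≤ ENNReal.ofReal (2 * ε) := by
      rw [ENNReal.tsum_eq_iSup_sum]
      apply iSup_le
      intro t
      rcases Finset.eq_empty_or_nonempty t with ht | ht
      · simp [ht]
      · set D : Finset (ℝ × ℝ) := t.image (fun C : ↥𝒞 => (pf ↑C, qf ↑C)) with hDdef
        have hinjt : ∀ C ∈ t, ∀ C' ∈ t, (pf ↑C, qf ↑C) = (pf ↑C', qf ↑C') → C = C' := by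
          intro C hCt C' hC't hp
          exact Subtype.ext (hinj ↑C C.2 ↑C' C'.2 hp)
        have hpre : IsPrePartition a b K D := by
          refine ⟨?_, ?_, ?_⟩
          · obtain ⟨C, hCt⟩ := ht
            rw [hDdef]
            exact ⟨(pf ↑C, qf ↑C), Finset.mem_image_of_mem (fun C : ↥𝒞 => (pf ↑C, qf ↑C)) hCt⟩
          · intro d hd
            rw [hDdef] at hd
            obtain ⟨C, hCt, rfl⟩ := Finset.mem_image.1 hd
            exact ⟨hpq ↑C C.2, hpK ↑C C.2, hqK ↑C C.2, hsubIcc ↑C C.2⟩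
          · intro d hd d' hd' hne
            obtain ⟨C, hCt, rfl⟩ := Finset.mem_image.1 hd
            obtain ⟨C', hC't, rfl⟩ := Finset.mem_image.1 hd'
            have hCC' : (↑C : Set ℝ) ≠ ↑C' := by
              intro h
              exact hne (by rw [Subtype.ext h])
            exact hmeet ↑C C.2 ↑C' C'.2 hCC'
        have hlen : ∑ d ∈ D, (d.2 - d.1) < δ := by
          have hennreal : ENNReal.ofReal (∑ d ∈ D, (d.2 - d.1)) < ENNReal.ofReal δ := by
            have hnonneg : ∀ d ∈ D, (0 : ℝ) ≤ d.2 - d.1 := by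
              intro d hd
              rw [hDdef] at hd
              obtain ⟨C, hCt, rfl⟩ := Finset.mem_image.1 hd
              simpa using hpq ↑C C.2
            rw [ENNReal.ofReal_sum_of_nonneg hnonneg]
            have hdisjt : (↑t : Set ↥𝒞).PairwiseDisjoint (fun C : ↥𝒞 => (↑C : Set ℝ)) := by
              intro C _ C' _ hne
              rw [Function.onFun, Set.disjoint_iff_inter_eq_empty]
              exact hCdisj ↑C C.2 ↑C' C'.2 (fun h => hne (Subtype.ext h))
            calc ∑ d ∈ D, ENNReal.ofReal (d.2 - d.1)
                = ∑ C ∈ t, ENNReal.ofReal (qf ↑C - pf ↑C) := Finset.sum_image hinjt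
              _ = ∑ C ∈ t, volume (Set.Ioo (pf ↑C) (qf ↑C)) := by
                  simp [Real.volume_Ioo]
              _ ≤ ∑ C ∈ t, volume (↑C : Set ℝ) :=
                  Finset.sum_le_sum (fun C _ => measure_mono (hIoo ↑C C.2))
              _ = volume (⋃ C ∈ t, (↑C : Set ℝ)) :=
                  (measure_biUnion_finset hdisjt (fun C _ => (hCopen ↑C C.2).measurableSet)).symm
              _ ≤ volume U := measure_mono (by
                  apply Set.iUnion₂_subset
                  intro C _
                  exact hCsub ↑C C.2)
              _ < ENNReal.ofReal δ := hUlt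
          exact (ENNReal.ofReal_lt_ofReal_iff hδ).1 hennreal
        have hosc := hACδ D hpre hlen
        have hoscsum : ∑ C ∈ t, osc F (Set.Icc (pf ↑C) (qf ↑C)) < ε := by
          have : ∑ d ∈ D, osc F (Set.Icc d.1 d.2)
              = ∑ C ∈ t, osc F (Set.Icc (pf ↑C) (qf ↑C)) := Finset.sum_image hinjt
          linarith [hosc, this.symm.le, this.le]
        calc ∑ C ∈ t, ENNReal.ofReal (2 * osc F (Set.Icc (pf ↑C) (qf ↑C)))
            = ENNReal.ofReal (∑ C ∈ t, 2 * osc F (Set.Icc (pf ↑C) (qf ↑C))) :=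
              (ENNReal.ofReal_sum_of_nonneg (fun C _ =>
                mul_nonneg (by norm_num) (osc_nonneg _ _))).symm
          _ ≤ ENNReal.ofReal (2 * ε) := by
              apply ENNReal.ofReal_le_ofReal
              rw [← Finset.mul_sum]
              linarith [hoscsum]
    calc volume (F '' S) ≤ volume (⋃ C ∈ 𝒞, F '' Set.Icc (pf C) (qf C)) := measure_mono hcover
      _ ≤ ∑' C : ↥𝒞, volume (F '' Set.Icc (pf ↑C) (qf ↑C)) :=
          measure_biUnion_le volume hcount _
      _ ≤ ∑' C : ↥𝒞, ENNReal.ofReal (2 * osc F (Set.Icc (pf ↑C) (qf ↑C))) :=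
          ENNReal.tsum_le_tsum (fun C => himg ↑C C.2)
      _ ≤ ENNReal.ofReal (2 * ε) := hboundC
  have hle : volume (F '' S) ≤ 0 := by
    apply ENNReal.le_of_forall_pos_le_add
    intro ε hε _
    rw [zero_add]
    have hpos : (0 : ℝ) < (ε : ℝ) / 2 := by
      have : (0:ℝ) < (ε:ℝ) := by exact_mod_cast hε
      linarith
    calc volume (F '' S) ≤ ENNReal.ofReal (2 * ((ε : ℝ) / 2)) := key _ hpos
      _ = ENNReal.ofReal (ε : ℝ) := by rw [show (2 : ℝ) * ((ε : ℝ) / 2) = (ε : ℝ) by ring]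
      _ = (ε : ℝ≥0∞) := ENNReal.ofReal_coe_nnreal
  exact le_antisymm hle zero_le

/-! ### Constancy of ACG* functions with zero derivative -/

lemma image_Icc_null {F : ℝ → ℝ} (hFc : ContinuousOn F (Set.Icc a b))
    (hACG : ACGStar a b F (Set.Icc a b))
    (hder : ∀ᵐ x ∂(volume.restrict (Set.Icc a b)), HasDerivAt F 0 x) :
    volume (F '' Set.Icc a b) = 0 := by
  obtain ⟨C, hC, hCU⟩ := hACG
  have h0 : volume ({x | ¬ HasDerivAt F 0 x} ∩ Set.Icc a b) = 0 := by
    have h := ae_iff.1 hder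
    rwa [Measure.restrict_apply' measurableSet_Icc] at h
  set N := toMeasurable volume ({x | ¬ HasDerivAt F 0 x} ∩ Set.Icc a b) with hNdef
  have hNm : MeasurableSet N := measurableSet_toMeasurable _ _
  have hN0 : volume N = 0 := by rw [hNdef, measure_toMeasurable]; exact h0
  set Z := Set.Icc a b \ N with hZdef
  have hZder : ∀ x ∈ Z, HasDerivAt F 0 x := by
    intro x hx
    by_contra h
    exact hx.2 (subset_toMeasurable _ _ ⟨h, hx.1⟩)
  have hZ0 : volume (F '' Z) = 0 := by
    have hZm : MeasurableSet Z := measurableSet_Icc.diff hNm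
    have hle := MeasureTheory.addHaar_image_le_lintegral_abs_det_fderiv volume hZm
      (f' := fun _ => (1 : ℝ →L[ℝ] ℝ).smulRight 0)
      (fun x hx => ((hZder x hx).hasDerivWithinAt).hasFDerivWithinAt)
    simpa [ContinuousLinearMap.det_toSpanSingleton] using hle
  have hdecomp : F '' Set.Icc a b ⊆ F '' Z ∪ ⋃ n, F '' (C n ∩ N) := by
    rintro _ ⟨x, hx, rfl⟩
    by_cases hxN : x ∈ N
    · have hxC : x ∈ ⋃ n, C n := hCU ▸ hx
      obtain ⟨n, hn⟩ := Set.mem_iUnion.1 hxC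
      exact Or.inr (Set.mem_iUnion.2 ⟨n, Set.mem_image_of_mem F ⟨hn, hxN⟩⟩)
    · exact Or.inl (Set.mem_image_of_mem F ⟨hx, hxN⟩)
  apply measure_mono_null hdecomp
  apply measure_union_null hZ0
  apply measure_iUnion_null
  intro n
  exact image_null_of_ACStar hFc (hC n).1 (hC n).2.1 (hC n).2.2 Set.inter_subset_left
    (measure_mono_null Set.inter_subset_right hN0)

lemma eq_const_of_ACGStar {F : ℝ → ℝ} (hFc : ContinuousOn F (Set.Icc a b))
    (hACG : ACGStar a b F (Set.Icc a b))
    (hder : ∀ᵐ x ∂(volume.restrict (Set.Icc a b)), HasDerivAt F 0 x) :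
    ∀ x ∈ Set.Icc a b, F x = F a := by
  intro x hx
  by_contra hne
  have h0 := image_Icc_null hFc hACG hder
  have hIccsub : Set.uIcc a x ⊆ Set.Icc a b := by
    rw [Set.uIcc_of_le hx.1]
    exact Set.Icc_subset_Icc le_rfl hx.2
  have hsub : Set.uIcc (F a) (F x) ⊆ F '' Set.Icc a b :=
    (intermediate_value_uIcc (hFc.mono hIccsub)).trans (Set.image_mono (f := F) hIccsub)
  have hnull : volume (Set.uIcc (F a) (F x)) = 0 := measure_mono_null hsub h0
  rw [Real.volume_interval] at hnull
  have : |F x - F a| ≠ 0 := abs_ne_zero.2 (sub_ne_zero.2 hne)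
  have habs : (0:ℝ) < |F x - F a| := lt_of_le_of_ne (abs_nonneg _) (Ne.symm this)
  exact (ENNReal.ofReal_pos.2 habs).ne' hnull

/-! ### Uniqueness of primitives, a.e. equality and continuity -/

lemma ae_mem_Ioo_of_restrict_Icc : ∀ᵐ x ∂(volume.restrict (Set.Icc a b)), x ∈ Set.Ioo a b := by
  rw [ae_iff, Measure.restrict_apply' measurableSet_Icc]
  rcases le_or_gt a b with hab | hab
  · apply measure_mono_null (t := ({a, b} : Set ℝ))
    · intro x hx
      have hxI : x ∈ Set.Icc a b \ Set.Ioo a b := ⟨hx.2, hx.1⟩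
      rwa [Set.Icc_diff_Ioo_same hab] at hxI
    · exact (Set.toFinite ({a, b} : Set ℝ)).countable.measure_zero volume
  · rw [Set.Icc_eq_empty_of_lt hab]
    simp

lemma eqOn_Icc_of_ae_eq (hab : a < b) {f g : ℝ → ℝ}
    (hf : ContinuousOn f (Set.Icc a b)) (hg : ContinuousOn g (Set.Icc a b))
    (h : f =ᵐ[volume.restrict (Set.Icc a b)] g) : ∀ x ∈ Set.Icc a b, f x = g x := by
  have hIoo : ∀ x ∈ Set.Ioo a b, f x = g x := by
    intro x hx
    by_contra hne
    have hx' : x ∈ Set.Icc a b := Set.Ioo_subset_Icc_self hx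
    have hcont : ContinuousWithinAt (fun y => f y - g y) (Set.Icc a b) x :=
      (hf x hx').sub (hg x hx')
    have hnhds : 𝓝[Set.Icc a b] x = 𝓝 x := by
      apply nhdsWithin_eq_nhds.2
      exact Filter.mem_of_superset (isOpen_Ioo.mem_nhds hx) Set.Ioo_subset_Icc_self
    have hev : ∀ᶠ y in 𝓝 x, f y - g y ≠ 0 := by
      rw [← hnhds]
      exact hcont.eventually_ne (sub_ne_zero.2 hne)
    obtain ⟨η, hη, hball⟩ := Metric.eventually_nhds_iff.1 hev
    set η' := min η (min (x - a) (b - x)) with hη'def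
    have hη' : 0 < η' := lt_min hη (lt_min (by linarith [hx.1]) (by linarith [hx.2]))
    have hsubset : Set.Ioo (x - η') (x + η') ⊆ {y | f y ≠ g y} ∩ Set.Icc a b := by
      intro y hy
      have h1 : dist y x < η := by
        rw [Real.dist_eq, abs_sub_lt_iff]
        constructor
        · have := hy.2; have : η' ≤ η := min_le_left _ _; linarith [hy.2, min_le_left η (min (x - a) (b - x))]
        · linarith [hy.1, min_le_left η (min (x - a) (b - x))]
      refine ⟨fun hfg => hball h1 (by rw [hfg]; ring), ?_, ?_⟩
      · have h2 : η' ≤ x - a := (min_le_right _ _).trans (min_le_left _ _)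
        linarith [hy.1]
      · have h3 : η' ≤ b - x := (min_le_right _ _).trans (min_le_right _ _)
        linarith [hy.2]
    have hpos : 0 < volume.restrict (Set.Icc a b) {y | f y ≠ g y} := by
      calc (0 : ℝ≥0∞) < ENNReal.ofReal (x + η' - (x - η')) := by
            rw [ENNReal.ofReal_pos]; linarith
        _ = volume (Set.Ioo (x - η') (x + η')) := (Real.volume_Ioo).symm
        _ = volume (Set.Ioo (x - η') (x + η') ∩ Set.Icc a b) := by
            rw [Set.inter_eq_self_of_subset_left
              (hsubset.trans Set.inter_subset_right)]
        _ = volume.restrict (Set.Icc a b) (Set.Ioo (x - η') (x + η')) :=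
            (Measure.restrict_apply' measurableSet_Icc).symm
        _ ≤ volume.restrict (Set.Icc a b) {y | f y ≠ g y} :=
            measure_mono (hsubset.trans Set.inter_subset_left)
    have hzero : volume.restrict (Set.Icc a b) {y | f y ≠ g y} = 0 := by
      have := ae_iff.1 h
      convert this using 2
    rw [hzero] at hpos
    exact lt_irrefl _ hpos
  intro x hx
  have hxcl : x ∈ closure (Set.Ioo a b) := by
    rw [closure_Ioo hab.ne]
    exact hx
  have hnb : (𝓝[Set.Ioo a b] x).NeBot := mem_closure_iff_nhdsWithin_neBot.1 hxcl
  have h1 : Filter.Tendsto f (𝓝[Set.Ioo a b] x) (𝓝 (f x)) :=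
    ((hf x hx).mono Set.Ioo_subset_Icc_self)
  have h2 : Filter.Tendsto g (𝓝[Set.Ioo a b] x) (𝓝 (g x)) :=
    ((hg x hx).mono Set.Ioo_subset_Icc_self)
  have h3 : Filter.Tendsto f (𝓝[Set.Ioo a b] x) (𝓝 (g x)) := by
    apply h2.congr'
    filter_upwards [self_mem_nhdsWithin] with y hy
    exact (hIoo y hy).symm
  exact tendsto_nhds_unique h1 h3

lemma primitive_unique (hab : a < b) {f₁ f₂ F₁ F₂ : ℝ → ℝ}
    (h₁ : HasDenjoyIntegralFn a b f₁ F₁) (h₂ : HasDenjoyIntegralFn a b f₂ F₂)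
    (hf : f₁ =ᵐ[volume.restrict (Set.Icc a b)] f₂) : ∀ x ∈ Set.Icc a b, F₁ x = F₂ x := by
  obtain ⟨hc₁, ha₁, hACG₁, hd₁⟩ := h₁
  obtain ⟨hc₂, ha₂, hACG₂, hd₂⟩ := h₂
  have hder : ∀ᵐ x ∂(volume.restrict (Set.Icc a b)),
      HasDerivAt (fun y => F₁ y - F₂ y) 0 x := by
    filter_upwards [hd₁, hd₂, hf] with x hx₁ hx₂ hfx
    have := hx₁.sub hx₂
    rw [hfx, sub_self] at this
    exact this
  have hconst := eq_const_of_ACGStar (hc₁.sub hc₂) (hACG₁.sub hACG₂ hc₁ hc₂) hder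
  intro x hx
  have := hconst x hx
  simp only [Pi.sub_apply, ha₁, ha₂, sub_zero, sub_self] at this
  linarith [this]

/-! ### Extension of primitives to continuous maps on ℝ -/

lemma exists_contMap_primitive (hab : a ≤ b) {f F : ℝ → ℝ} (hF : HasDenjoyIntegralFn a b f F) :
    ∃ G : C(ℝ, ℝ), HasDenjoyIntegralFn a b f ⇑G := by
  obtain ⟨hFc, hFa, hACG, hder⟩ := hF
  set G : ℝ → ℝ := fun x => F (Set.projIcc a b hab x) with hGdef
  have hGcont : Continuous G := hFc.restrict.comp continuous_projIcc
  have hGeq : ∀ x ∈ Set.Icc a b, G x = F x := by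
    intro x hx
    rw [hGdef]
    simp [Set.projIcc_of_mem hab hx]
  refine ⟨⟨G, hGcont⟩, hGcont.continuousOn, ?_, ?_, ?_⟩
  · show G a = 0
    rw [hGeq a (Set.left_mem_Icc.2 hab), hFa]
  · obtain ⟨C, hC, hCU⟩ := hACG
    refine ⟨C, fun n => ⟨(hC n).1, (hC n).2.1, ?_⟩, hCU⟩
    intro ε hε
    obtain ⟨δ, hδ, hAC⟩ := (hC n).2.2 ε hε
    refine ⟨δ, hδ, fun D hD hlen => ?_⟩
    have hsum := hAC D hD hlen
    have heq : ∀ p ∈ D, osc G (Set.Icc p.1 p.2) = osc F (Set.Icc p.1 p.2) :=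
      fun p hp => osc_congr (fun x hx => hGeq x ((hD.2.1 p hp).2.2.2 hx))
    show ∑ p ∈ D, osc G (Set.Icc p.1 p.2) < ε
    rw [Finset.sum_congr rfl heq]
    exact hsum
  · filter_upwards [hder, ae_mem_Ioo_of_restrict_Icc] with x hd hx
    have hev : G =ᶠ[𝓝 x] F := by
      filter_upwards [isOpen_Ioo.mem_nhds hx] with y hy
      exact hGeq y (Set.Ioo_subset_Icc_self hy)
    exact hd.congr_of_eventuallyEq hev

/-! ### Computing Xop -/

lemma Xop_eq (hab : a < b) (g : MSpace a b) {F : ℝ → ℝ}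
    (hF : HasDenjoyIntegralFn a b (fun x => g x) F) :
    Xop a b g = AEEqFun.mk F (hF.1.aestronglyMeasurable measurableSet_Icc) := by
  have hcond : ∃ Fc : C(ℝ, ℝ), HasDenjoyIntegralFn a b (fun x => g x) ⇑Fc :=
    exists_contMap_primitive hab.le hF
  rw [Xop, dif_pos hcond]
  apply AEEqFun.mk_eq_mk.2
  have hspec := Classical.choose_spec hcond
  have huniq := primitive_unique hab hspec hF (Filter.EventuallyEq.rfl)
  filter_upwards [ae_restrict_mem measurableSet_Icc] with x hx
  exact huniq x hx

lemma mk_sub_mk {U V : ℝ → ℝ} (hU : AEStronglyMeasurable U (volume.restrict (Set.Icc a b)))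
    (hV : AEStronglyMeasurable V (volume.restrict (Set.Icc a b))) :
    (AEEqFun.mk U hU - AEEqFun.mk V hV : MSpace a b)
      = AEEqFun.mk (fun x => U x - V x) (hU.sub hV) := by
  apply AEEqFun.ext
  filter_upwards [AEEqFun.coeFn_sub (AEEqFun.mk U hU) (AEEqFun.mk V hV),
    AEEqFun.coeFn_mk U hU, AEEqFun.coeFn_mk V hV,
    AEEqFun.coeFn_mk (fun x => U x - V x) (hU.sub hV)] with x h1 h2 h3 h4
  rw [h1, h4, Pi.sub_apply, h2, h3]

/-! ### The polynomial chain -/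

def Pden (a c : ℝ) (j : ℕ) : ℝ → ℝ := fun x => c * (x - a) ^ j / (j.factorial : ℝ)

lemma Pden_cont (a c : ℝ) (j : ℕ) : Continuous (Pden a c j) := by
  unfold Pden
  fun_prop

lemma Pden_hasDerivAt (a c : ℝ) (j : ℕ) (x : ℝ) :
    HasDerivAt (Pden a c (j + 1)) (Pden a c j x) x := by
  have h1 : HasDerivAt (fun y : ℝ => y - a) 1 x := (hasDerivAt_id x).sub_const a
  have h2 : HasDerivAt (fun y : ℝ => (y - a) ^ (j + 1))
      ((j + 1 : ℕ) * (x - a) ^ (j + 1 - 1) * 1) x := h1.pow (j + 1)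
  have h3 := (h2.const_mul c).div_const ((j + 1).factorial : ℝ)
  refine h3.congr_deriv (Eq.symm ?_)
  have hfac : ((j + 1).factorial : ℝ) = (j + 1 : ℝ) * (j.factorial : ℝ) := by
    rw [Nat.factorial_succ]
    push_cast
    ring
  have hjne : (j.factorial : ℝ) ≠ 0 := Nat.cast_ne_zero.2 j.factorial_ne_zero
  have hj1ne : (j + 1 : ℝ) ≠ 0 := by positivity
  unfold Pden
  rw [hfac]
  simp only [Nat.add_sub_cancel]
  push_cast
  field_simp

lemma ACStar_of_deriv_bound {F f : ℝ → ℝ} {L : ℝ} (hL : 0 ≤ L)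
    (hd : ∀ x, HasDerivAt F (f x) x) (hb : ∀ x ∈ Set.Icc a b, |f x| ≤ L) (K : Set ℝ) :
    ACStar a b F K := by
  intro ε hε
  refine ⟨ε / (L + 1), by positivity, fun D hD hlen => ?_⟩
  have key : ∀ p ∈ D, osc F (Set.Icc p.1 p.2) ≤ L * (p.2 - p.1) := by
    intro p hp
    obtain ⟨hple, _, _, hsub⟩ := hD.2.1 p hp
    apply osc_le (mul_nonneg hL (by linarith))
    intro x hx y hy
    have hmvt : ‖F x - F y‖ ≤ L * ‖x - y‖ := by
      apply (convex_Icc p.1 p.2).norm_image_sub_le_of_norm_hasDerivWithin_le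
        (f' := f) (fun z hz => (hd z).hasDerivWithinAt) ?_ hy hx
      intro z hz
      rw [Real.norm_eq_abs]
      exact hb z (hsub hz)
    rw [Real.norm_eq_abs, Real.norm_eq_abs] at hmvt
    have hxy : |x - y| ≤ p.2 - p.1 := by
      rw [abs_sub_le_iff]
      constructor <;> linarith [hx.1, hx.2, hy.1, hy.2]
    calc |F x - F y| ≤ L * |x - y| := hmvt
      _ ≤ L * (p.2 - p.1) := mul_le_mul_of_nonneg_left hxy hL
  calc ∑ p ∈ D, osc F (Set.Icc p.1 p.2) ≤ ∑ p ∈ D, L * (p.2 - p.1) := Finset.sum_le_sum key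
    _ = L * ∑ p ∈ D, (p.2 - p.1) := by rw [Finset.mul_sum]
    _ ≤ L * (ε / (L + 1)) := mul_le_mul_of_nonneg_left hlen.le hL
    _ < ε := by
        rw [mul_div_assoc', div_lt_iff₀ (by linarith)]
        nlinarith [hε, hL]

lemma Pden_hasDenjoy (hab : a ≤ b) (c : ℝ) (j : ℕ) :
    HasDenjoyIntegralFn a b (Pden a c j) (Pden a c (j + 1)) := by
  have hL : (0:ℝ) ≤ |c| * (b - a) ^ j / (j.factorial : ℝ) :=
    div_nonneg (mul_nonneg (abs_nonneg _) (pow_nonneg (by linarith) _)) (Nat.cast_nonneg _)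
  have hbound : ∀ x ∈ Set.Icc a b, |Pden a c j x| ≤ |c| * (b - a) ^ j / (j.factorial : ℝ) := by
    intro x hx
    have h1 : |x - a| ≤ b - a := by
      rw [abs_of_nonneg (by linarith [hx.1])]
      linarith [hx.2]
    have h2 : |x - a| ^ j ≤ (b - a) ^ j := pow_le_pow_left₀ (abs_nonneg _) h1 j
    calc |Pden a c j x| = |c| * |x - a| ^ j / (j.factorial : ℝ) := by
          unfold Pden
          rw [abs_div, abs_mul, abs_pow, Nat.abs_cast]
      _ ≤ |c| * (b - a) ^ j / (j.factorial : ℝ) := by gcongr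
  refine ⟨(Pden_cont a c (j + 1)).continuousOn, ?_, ?_, ?_⟩
  · unfold Pden
    simp
  · exact ⟨fun _ => Set.Icc a b, fun n => ⟨isClosed_Icc, Set.Subset.rfl,
      ACStar_of_deriv_bound hL (Pden_hasDerivAt a c j) hbound _⟩, (Set.iUnion_const _).symm⟩
  · exact Filter.Eventually.of_forall (fun x => Pden_hasDerivAt a c j x)

lemma Xop_iterate_const (hab : a < b) (c : ℝ) (j : ℕ) :
    (Xop a b)^[j] (AEEqFun.mk (fun _ => c) aestronglyMeasurable_const : MSpace a b) =
    AEEqFun.mk (Pden a c j)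
      ((Pden_cont a c j).aestronglyMeasurable) := by
  induction j with
  | zero =>
    simp only [Function.iterate_zero, id_eq]
    apply AEEqFun.mk_eq_mk.2
    apply Filter.EventuallyEq.of_eq
    funext x
    unfold Pden
    simp
  | succ n ih =>
    rw [Function.iterate_succ_apply', ih]
    have hprim : HasDenjoyIntegralFn a b
        (fun x => (AEEqFun.mk (Pden a c n) ((Pden_cont a c n).aestronglyMeasurable)
          : MSpace a b) x) (Pden a c (n + 1)) := by
      obtain ⟨hc1, hc2, hc3, hc4⟩ := Pden_hasDenjoy hab.le c n
      refine ⟨hc1, hc2, hc3, ?_⟩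
      filter_upwards [hc4, AEEqFun.coeFn_mk (Pden a c n)
        ((Pden_cont a c n).aestronglyMeasurable)] with x h1 h2
      rw [h2]
      exact h1
    rw [Xop_eq hab _ hprim]

/-! ### The key non-representability lemma -/

lemma no_rep (hab : a < b) (M : Submodule ℝ (MSpace a b))
    (hXcl : ∀ g ∈ M, Xop a b g ∈ M)
    (hDen : ∀ g ∈ M, DenjoyIntegrable a b fun x => g x) :
    ∀ k : ℕ, ∀ c : ℝ, c ≠ 0 → ∀ u ∈ M, ∀ v ∈ M,
      (AEEqFun.mk (Pden a c k) ((Pden_cont a c k).aestronglyMeasurable) : MSpace a b)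
        ≠ (Xop a b)^[k + 1] u - (Xop a b)^[k + 1] v := by
  have hiter : ∀ j : ℕ, ∀ g ∈ M, (Xop a b)^[j] g ∈ M := by
    intro j
    induction j with
    | zero => intro g hg; simpa using hg
    | succ n ihn =>
      intro g hg
      rw [Function.iterate_succ_apply']
      exact hXcl _ (ihn g hg)
  intro k
  induction k with
  | zero =>
    intro c hc u hu v hv heq
    obtain ⟨U, hU⟩ := hDen u hu
    obtain ⟨V, hV⟩ := hDen v hv
    rw [Function.iterate_one, Xop_eq hab u hU, Xop_eq hab v hV, mk_sub_mk] at heq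
    have hae := AEEqFun.mk_eq_mk.1 heq
    have heqa := eqOn_Icc_of_ae_eq hab (Pden_cont a c 0).continuousOn (hU.1.sub hV.1) hae
      a (Set.left_mem_Icc.2 hab.le)
    rw [Pi.sub_apply, hU.2.1, hV.2.1] at heqa
    apply hc
    have : Pden a c 0 a = c := by unfold Pden; simp
    rw [this] at heqa
    linarith [heqa]
  | succ n ih =>
    intro c hc u hu v hv heq
    have hwu : (Xop a b)^[n + 1] u ∈ M := hiter (n + 1) u hu
    have hwv : (Xop a b)^[n + 1] v ∈ M := hiter (n + 1) v hv
    obtain ⟨U, hU⟩ := hDen _ hwu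
    obtain ⟨V, hV⟩ := hDen _ hwv
    rw [show n + 1 + 1 = (n + 1) + 1 from rfl, Function.iterate_succ_apply' (Xop a b) (n + 1) u,
      Function.iterate_succ_apply' (Xop a b) (n + 1) v,
      Xop_eq hab _ hU, Xop_eq hab _ hV, mk_sub_mk] at heq
    have hae := AEEqFun.mk_eq_mk.1 heq
    have heqOn := eqOn_Icc_of_ae_eq hab (Pden_cont a c (n + 1)).continuousOn
      (hU.1.sub hV.1) hae
    have hkey : (Xop a b)^[n + 1] u - (Xop a b)^[n + 1] v
        = (AEEqFun.mk (Pden a c n) ((Pden_cont a c n).aestronglyMeasurable) : MSpace a b) := by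
      apply AEEqFun.ext
      filter_upwards [hU.2.2.2, hV.2.2.2, ae_mem_Ioo_of_restrict_Icc,
        AEEqFun.coeFn_sub ((Xop a b)^[n + 1] u) ((Xop a b)^[n + 1] v),
        AEEqFun.coeFn_mk (Pden a c n) ((Pden_cont a c n).aestronglyMeasurable)]
        with x hdU hdV hx hcoe hmk
      rw [hcoe, Pi.sub_apply, hmk]
      have hev : (fun y => U y - V y) =ᶠ[𝓝 x] Pden a c (n + 1) := by
        filter_upwards [isOpen_Ioo.mem_nhds hx] with y hy
        exact (heqOn y (Set.Ioo_subset_Icc_self hy)).symm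
      have hP : HasDerivAt (Pden a c (n + 1))
          ((((Xop a b)^[n + 1] u : MSpace a b) : ℝ → ℝ) x
            - (((Xop a b)^[n + 1] v : MSpace a b) : ℝ → ℝ) x) x :=
        (hdU.sub hdV).congr_of_eventuallyEq hev.symm
      exact hP.unique (Pden_hasDerivAt a c n x)
    exact ih c hc u hu v hv hkey.symm

end DenjoyAux

/-- Theorem: `[XᵏM : Xᵏ⁺¹M]` is infinite, i.e. no finitely many cosets of `Xᵏ⁺¹M`
cover `XᵏM`. -/
theorem index_infinite (a b : ℝ) (hab : a < b) (M : Submodule ℝ (MSpace a b))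
    (hXcl : ∀ g ∈ M, Xop a b g ∈ M)
    (hC : ∀ F : C(ℝ, ℝ), AEEqFun.mk ⇑F F.continuous.aestronglyMeasurable ∈ M)
    (hDen : ∀ g ∈ M, DenjoyIntegrable a b fun x => g x)
    (hcase : ((M : Set (MSpace a b)) =
          {g | ∃ F : C(ℝ, ℝ), g = AEEqFun.mk ⇑F F.continuous.aestronglyMeasurable}) ∨
        (∀ g ∈ M, ∀ c d : ℝ, Ioo c d ⊆ Icc a b →
          AEEqFun.mk ((Ioo c d).indicator fun x => g x)
            (g.aestronglyMeasurable.indicator measurableSet_Ioo) ∈ M)) :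
    ∀ k : ℕ, ¬ ∃ s : Finset (MSpace a b),
      ∀ g ∈ (Xop a b)^[k] '' (M : Set (MSpace a b)), ∃ h ∈ s,
        g - h ∈ (Xop a b)^[k+1] '' (M : Set (MSpace a b)) := by
  intro k hex
  obtain ⟨s, hs⟩ := hex
  set cm : ℕ → MSpace a b := fun n =>
    AEEqFun.mk (fun _ => (n : ℝ)) aestronglyMeasurable_const with hcmdef
  have hcmM : ∀ n : ℕ, cm n ∈ M := by
    intro n
    have h1 := hC (ContinuousMap.const ℝ (n : ℝ))
    have h2 : cm n = AEEqFun.mk ⇑(ContinuousMap.const ℝ (n : ℝ))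
        (ContinuousMap.const ℝ (n : ℝ)).continuous.aestronglyMeasurable := rfl
    rwa [h2]
  have hg : ∀ n : ℕ, (Xop a b)^[k] (cm n) ∈ (Xop a b)^[k] '' (M : Set (MSpace a b)) :=
    fun n => Set.mem_image_of_mem _ (hcmM n)
  choose h hh hsub using fun n => hs _ (hg n)
  have hexpair : ∃ n m : ℕ, n ≠ m ∧ h n = h m := by
    have : ∃ n m : ℕ, n ≠ m ∧ (⟨h n, hh n⟩ : {x // x ∈ s}) = ⟨h m, hh m⟩ :=
      Finite.exists_ne_map_eq_of_infinite _
    obtain ⟨n, m, hnm, he⟩ := this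
    exact ⟨n, m, hnm, congrArg Subtype.val he⟩
  obtain ⟨n, m, hnm, hhe⟩ := hexpair
  obtain ⟨u, hu, hXu⟩ := hsub n
  obtain ⟨v, hv, hXv⟩ := hsub m
  have hdiff : (Xop a b)^[k + 1] u - (Xop a b)^[k + 1] v
      = (Xop a b)^[k] (cm n) - (Xop a b)^[k] (cm m) := by
    rw [hXu, hXv, hhe]
    abel
  have hfinal : (AEEqFun.mk (Pden a ((n : ℝ) - (m : ℝ)) k)
      ((Pden_cont a ((n : ℝ) - (m : ℝ)) k).aestronglyMeasurable) : MSpace a b)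
      = (Xop a b)^[k + 1] u - (Xop a b)^[k + 1] v := by
    rw [hdiff, hcmdef]
    simp only []
    rw [Xop_iterate_const hab (n : ℝ) k, Xop_iterate_const hab (m : ℝ) k, mk_sub_mk]
    apply AEEqFun.mk_eq_mk.2
    apply Filter.EventuallyEq.of_eq
    funext x
    unfold Pden
    ring
  have hne : ((n : ℝ) - (m : ℝ)) ≠ 0 := by
    rw [sub_ne_zero]
    exact_mod_cast hnm
  exact no_rep hab M hXcl hDen k _ hne u hu v hv hfinal
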